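/- For all natural numbers j ≥ 1 and p ≥ 1, the series ∑_{r=p}^∞ arctan( √5·L_{2j−1}²·F_{(4j−2)r+2j−1} / L_{(4j−2)r+2j−1}² ) converges and its sum equals arctan( (1/√5)·L_{2j−1} / F_{(4j−2)p} ). -/

import Mathlib

open Real goldenRatio Filter Topology

def lucas : ℕ → ℕ
  | 0 => 2
  | 1 => 1
  | n + 2 => lucas (n + 1) + lucas n

noncomputable def gA : ℝ := goldenRatio
noncomputable def gB : ℝ := goldenConj

lemma gAB : gA * gB = -1 := goldenRatio_mul_goldenConj

lemma fib_binet (n : ℕ) : (Nat.fib n : ℝ) = (gA ^ n - gB ^ n) / Real.sqrt 5 :=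
  Real.coe_fib_eq n

lemma gA_sq : gA ^ 2 = gA + 1 := goldenRatio_sq
lemma gB_sq : gB ^ 2 = gB + 1 := goldenConj_sq

lemma lucas_pos : ∀ n, 0 < lucas n
  | 0 => by decide
  | 1 => by decide
  | n + 2 => by rw [lucas]; exact Nat.add_pos_left (lucas_pos (n+1)) _

lemma lucas_binet : ∀ n : ℕ, (lucas n : ℝ) = gA ^ n + gB ^ n
  | 0 => by norm_num [lucas]
  | 1 => by
      show ((1:ℕ) : ℝ) = gA ^ 1 + gB ^ 1
      simp [gA, gB, goldenRatio_add_goldenConj]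
  | n + 2 => by
    rw [lucas]
    push_cast
    rw [lucas_binet (n+1), lucas_binet n]
    have h1 : gA ^ (n+2) = gA ^ n * gA ^ 2 := by ring
    have h2 : gB ^ (n+2) = gB ^ n * gB ^ 2 := by ring
    rw [h1, h2, gA_sq, gB_sq]; ring

lemma arctan_sub' {x y : ℝ} (hx : 0 ≤ x) (hy : 0 ≤ y) :
    Real.arctan x = Real.arctan y + Real.arctan ((x - y) / (1 + x * y)) := by
  have hxy : (0:ℝ) < 1 + x * y := by positivity
  have h1 : 1 - y * ((x - y) / (1 + x * y)) = (1 + y ^ 2) / (1 + x * y) := by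
    field_simp; ring
  have h2 : y * ((x - y) / (1 + x * y)) < 1 := by
    have : (0:ℝ) < (1 + y ^ 2) / (1 + x * y) := by positivity
    linarith
  rw [Real.arctan_add h2, h1]
  congr 1
  rw [div_div_eq_mul_div, eq_div_iff (by positivity)]
  field_simp
  ring

lemma fib_I1 (m k : ℕ) (hm : Odd m) (hk : Even k) :
    (Nat.fib (k + 2 * m) : ℝ) = Nat.fib k + lucas m * Nat.fib (k + m) := by
  have hef : gA ^ m * gB ^ m = -1 := by
    rw [← mul_pow, gAB, hm.neg_one_pow]
  have hgh : gA ^ k * gB ^ k = 1 := by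
    rw [← mul_pow, gAB, hk.neg_one_pow]
  have h5 : Real.sqrt 5 ≠ 0 := by positivity
  rw [fib_binet, fib_binet, fib_binet, lucas_binet]
  have e1 : gA ^ (k + 2 * m) = gA ^ k * (gA ^ m * gA ^ m) := by
    rw [two_mul, ← pow_add, ← pow_add]
  have e2 : gB ^ (k + 2 * m) = gB ^ k * (gB ^ m * gB ^ m) := by
    rw [two_mul, ← pow_add, ← pow_add]
  have e3 : gA ^ (k + m) = gA ^ k * gA ^ m := by rw [← pow_add]
  have e4 : gB ^ (k + m) = gB ^ k * gB ^ m := by rw [← pow_add]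
  rw [e1, e2, e3, e4]
  set e := gA ^ m with he
  set f := gB ^ m with hf
  set g := gA ^ k with hg
  set h := gB ^ k with hh
  clear_value e f g h
  field_simp
  linear_combination (h - g) * hef

lemma fib_I2 (m k : ℕ) (hm : Odd m) (hk : Even k) :
    5 * (Nat.fib k : ℝ) * Nat.fib (k + 2 * m) + (lucas m : ℝ) ^ 2
      = (lucas (k + m) : ℝ) ^ 2 := by
  have hef : gA ^ m * gB ^ m = -1 := by
    rw [← mul_pow, gAB, hm.neg_one_pow]
  have hgh : gA ^ k * gB ^ k = 1 := by
    rw [← mul_pow, gAB, hk.neg_one_pow]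
  have h5 : Real.sqrt 5 ≠ 0 := by positivity
  have h5sq : Real.sqrt 5 ^ 2 = 5 := Real.sq_sqrt (by norm_num)
  rw [fib_binet, fib_binet, lucas_binet, lucas_binet]
  have e1 : gA ^ (k + 2 * m) = gA ^ k * (gA ^ m * gA ^ m) := by
    rw [two_mul, ← pow_add, ← pow_add]
  have e2 : gB ^ (k + 2 * m) = gB ^ k * (gB ^ m * gB ^ m) := by
    rw [two_mul, ← pow_add, ← pow_add]
  have e3 : gA ^ (k + m) = gA ^ k * gA ^ m := by rw [← pow_add]
  have e4 : gB ^ (k + m) = gB ^ k * gB ^ m := by rw [← pow_add]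
  rw [e1, e2, e3, e4]
  set e := gA ^ m with he
  set f := gB ^ m with hf
  set g := gA ^ k with hg
  set h := gB ^ k with hh
  clear_value e f g h
  field_simp
  linear_combination (-5) * (e+f)^2 * hgh - (2*g*h*e*f + g^2*e^2 + h^2*f^2 - 2*e*f - e^2 - f^2) * h5sq

lemma arctan_nonneg' {x : ℝ} (hx : 0 ≤ x) : 0 ≤ Real.arctan x := by
  have := Real.arctan_strictMono.monotone hx
  rwa [Real.arctan_zero] at this

lemma key (m p : ℕ) (hm : Odd m) (hp : 1 ≤ p) :
    HasSum (fun r : ℕ =>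
        Real.arctan (Real.sqrt 5 * (lucas m : ℝ) ^ 2 *
            (Nat.fib (2 * m * (p + r) + m) : ℝ) /
          (lucas (2 * m * (p + r) + m) : ℝ) ^ 2))
      (Real.arctan ((1 / Real.sqrt 5) * (lucas m : ℝ) /
        (Nat.fib (2 * m * p) : ℝ))) := by
  have hm1 : 0 < m := hm.pos
  have hs5 : (0:ℝ) < Real.sqrt 5 := by positivity
  have h5sq : Real.sqrt 5 ^ 2 = 5 := Real.sq_sqrt (by norm_num)
  have hL : (0:ℝ) < (lucas m : ℝ) := by exact_mod_cast lucas_pos m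
  -- the telescoping step
  have step : ∀ s : ℕ, 1 ≤ s →
      Real.arctan ((1 / Real.sqrt 5) * (lucas m : ℝ) / (Nat.fib (2 * m * s) : ℝ))
        = Real.arctan ((1 / Real.sqrt 5) * (lucas m : ℝ) / (Nat.fib (2 * m * (s+1)) : ℝ))
          + Real.arctan (Real.sqrt 5 * (lucas m : ℝ) ^ 2 *
              (Nat.fib (2 * m * s + m) : ℝ) / (lucas (2 * m * s + m) : ℝ) ^ 2) := by
    intro s hs
    have e2m : 2 * m * (s + 1) = 2 * m * s + 2 * m := by ring
    rw [e2m]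
    have hkpos : 0 < 2 * m * s := Nat.mul_pos (Nat.mul_pos (by norm_num) hm1) hs
    set k := 2 * m * s with hk0
    have hk : Even k := ⟨m * s, by rw [hk0]; ring⟩
    have hfk : (0:ℝ) < (Nat.fib k : ℝ) := by exact_mod_cast Nat.fib_pos.2 hkpos
    have hfK : (0:ℝ) < (Nat.fib (k + 2 * m) : ℝ) := by
      exact_mod_cast Nat.fib_pos.2 (by omega)
    have hLn : (0:ℝ) < (lucas (k + m) : ℝ) := by exact_mod_cast lucas_pos (k + m)
    have hfn : (0:ℝ) < (Nat.fib (k + m) : ℝ) := by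
      exact_mod_cast Nat.fib_pos.2 (by omega)
    have hx : 0 ≤ (1 / Real.sqrt 5) * (lucas m : ℝ) / (Nat.fib k : ℝ) := by positivity
    have hy : 0 ≤ (1 / Real.sqrt 5) * (lucas m : ℝ) / (Nat.fib (k + 2 * m) : ℝ) := by
      positivity
    have hI1 := fib_I1 m k hm hk
    have hI2 := fib_I2 m k hm hk
    set c := (lucas m : ℝ)
    set F := (Nat.fib k : ℝ)
    set G := (Nat.fib (k + m) : ℝ)
    set N := (lucas (k + m) : ℝ)
    set s5 := Real.sqrt 5
    set x := 1 / s5 * c / F with hxd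
    set y := 1 / s5 * c / (Nat.fib (k + 2 * m) : ℝ) with hyd
    rw [arctan_sub' hx hy]
    congr 2
    rw [hxd, hyd, hI1] at *
    have hd : (0:ℝ) < F + c * G := by positivity
    have hnum : 1 / s5 * c / F - 1 / s5 * c / (F + c * G)
        = c ^ 2 * G / (s5 * F * (F + c * G)) := by
      field_simp
      ring
    have hden : 1 + (1 / s5 * c / F) * (1 / s5 * c / (F + c * G))
        = N ^ 2 / (5 * F * (F + c * G)) := by
      have expand : 1 / s5 * c / F * (1 / s5 * c / (F + c * G))
          = c ^ 2 / (s5 ^ 2 * F * (F + c * G)) := by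
        field_simp
      rw [expand, h5sq, eq_div_iff (by positivity)]
      field_simp
      linear_combination hI2
    rw [hnum, hden]
    rw [div_div_div_eq]
    rw [div_eq_div_iff (by positivity) (by positivity)]
    linear_combination (-(c^2 * G * F * (F + c*G) * N^2)) * h5sq
  -- nonnegativity of the terms
  have hnn : ∀ r : ℕ, 0 ≤ Real.arctan (Real.sqrt 5 * (lucas m : ℝ) ^ 2 *
      (Nat.fib (2 * m * (p + r) + m) : ℝ) / (lucas (2 * m * (p + r) + m) : ℝ) ^ 2) := by
    intro r
    apply arctan_nonneg'
    positivity
  rw [hasSum_iff_tendsto_nat_of_nonneg hnn]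
  set a : ℕ → ℝ := fun s =>
    Real.arctan ((1 / Real.sqrt 5) * (lucas m : ℝ) / (Nat.fib (2 * m * s) : ℝ)) with ha
  have hpart : ∀ n : ℕ, (∑ i ∈ Finset.range n,
      Real.arctan (Real.sqrt 5 * (lucas m : ℝ) ^ 2 *
        (Nat.fib (2 * m * (p + i) + m) : ℝ) / (lucas (2 * m * (p + i) + m) : ℝ) ^ 2))
      = a p - a (p + n) := by
    intro n
    have : ∀ i ∈ Finset.range n,
        Real.arctan (Real.sqrt 5 * (lucas m : ℝ) ^ 2 *
          (Nat.fib (2 * m * (p + i) + m) : ℝ) / (lucas (2 * m * (p + i) + m) : ℝ) ^ 2)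
        = (fun i => a (p + i)) i - (fun i => a (p + i)) (i + 1) := by
      intro i _
      have h := step (p + i) (by omega)
      simp only [ha]
      have e : p + (i + 1) = (p + i) + 1 := by omega
      rw [e]
      linarith [h]
    rw [Finset.sum_congr rfl this, Finset.sum_range_sub' (fun i => a (p + i)) n]
    norm_num
  have hfib : Filter.Tendsto (fun n : ℕ => (Nat.fib (2 * m * (p + n)) : ℝ))
      Filter.atTop Filter.atTop := by
    apply tendsto_natCast_atTop_atTop.comp
    apply Filter.tendsto_atTop_mono' Filter.atTop ?_ Filter.tendsto_id
    filter_upwards [Filter.eventually_ge_atTop 5] with n hn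
    have h1 : 5 ≤ 2 * m * (p + n) := by nlinarith
    calc (id n : ℕ) = n := rfl
      _ ≤ 2 * m * (p + n) := by nlinarith
      _ ≤ Nat.fib (2 * m * (p + n)) := Nat.le_fib_self h1
  have h0 : Filter.Tendsto (fun n : ℕ => a (p + n)) Filter.atTop (nhds 0) := by
    have hq : Filter.Tendsto (fun n : ℕ =>
        (1 / Real.sqrt 5) * (lucas m : ℝ) / (Nat.fib (2 * m * (p + n)) : ℝ))
        Filter.atTop (nhds 0) := Filter.Tendsto.div_atTop tendsto_const_nhds hfib
    have := (Real.continuous_arctan.tendsto 0).comp hq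
    simpa [ha, Real.arctan_zero, Function.comp_def] using this
  have hmain : Filter.Tendsto (fun n : ℕ => a p - a (p + n)) Filter.atTop (nhds (a p)) := by
    simpa using (tendsto_const_nhds :
      Filter.Tendsto (fun _ : ℕ => a p) Filter.atTop (nhds (a p))).sub h0
  exact hmain.congr (fun n => (hpart n).symm)

theorem stmt15 (j p : ℕ) (hj : 1 ≤ j) (hp : 1 ≤ p) :
    HasSum (fun r : ℕ =>
        Real.arctan (Real.sqrt 5 * (lucas (2 * j - 1) : ℝ) ^ 2 *
            (Nat.fib ((4 * j - 2) * (p + r) + 2 * j - 1) : ℝ) /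
          (lucas ((4 * j - 2) * (p + r) + 2 * j - 1) : ℝ) ^ 2))
      (Real.arctan ((1 / Real.sqrt 5) * (lucas (2 * j - 1) : ℝ) /
        (Nat.fib ((4 * j - 2) * p) : ℝ))) := by
  obtain ⟨i, rfl⟩ : ∃ i, j = 1 + i := ⟨j - 1, by omega⟩
  have e2 : 4 * (1 + i) - 2 = 2 * (2 * i + 1) := by omega
  have e3 : 2 * (1 + i) - 1 = 2 * i + 1 := by omega
  have e1 : ∀ a : ℕ, a + 2 * (1 + i) - 1 = a + (2 * i + 1) := fun a => by omega
  simp only [e2, e3, e1]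
  exact key (2 * i + 1) p ⟨i, by ring⟩ hp
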